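/- Self-defeating winner swap: Suppose under sincere voting, proposals W₀ and W̃ have generalised median scores φ_σ(u(W₀)) > φ_σ(u(W̃)) > 0. Suppose member i unilaterally misreports and, under the misreport, φ_σ(u(W₀)) strictly decreases and φ_σ(u(W̃)) strictly increases. Then member i's sincere utilities satisfy u(v_i*, W₀) > u(v_i*, W̃): the misreporter strictly prefers the original winner W₀ to W̃. -/

import Mathlib

local instance : IsTotal ℝ (fun a b : ℝ => b ≤ a) := ⟨fun a b => le_total b a⟩
local instance : IsTrans ℝ (fun a b : ℝ => b ≤ a) := ⟨fun _ _ _ h h' => le_trans h' h⟩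
local instance : IsRefl ℝ (fun a b : ℝ => b ≤ a) := ⟨fun a => le_refl a⟩


/-- The `k`-th largest entry of a vector (`k` counted from 1). -/
noncomputable def kthLargest {n : ℕ} (u : Fin n → ℝ) (k : ℕ) : ℝ :=
  ((List.ofFn u).insertionSort (fun a b => b ≤ a)).getD (k - 1) 0

section
variable {n : ℕ} (u : Fin n → ℝ) (k : ℕ)

lemma kth_countP_ge (hk1 : 1 ≤ k) (hkn : k ≤ n) :
    k ≤ (List.ofFn u).countP (fun x => decide (kthLargest u k ≤ x)) := by
  set L := (List.ofFn u).insertionSort (fun a b => b ≤ a) with hL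
  have hlen : L.length = n := by simp [hL]
  have hsort : List.Pairwise (fun a b : ℝ => b ≤ a) L := List.pairwise_insertionSort _ _
  have hklen : k - 1 < L.length := by omega
  have hv : kthLargest u k = L.get ⟨k - 1, hklen⟩ := by
    simp [kthLargest, ← hL, List.getD_eq_getElem, hklen]
  have hperm : (List.ofFn u).countP (fun x => decide (kthLargest u k ≤ x)) =
      L.countP (fun x => decide (kthLargest u k ≤ x)) :=
    (List.perm_insertionSort _ _).countP_eq _ |>.symm
  rw [hperm]
  have hsplit : L = L.take k ++ L.drop k := (List.take_append_drop k L).symm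
  have htake : (L.take k).countP (fun x => decide (kthLargest u k ≤ x)) = k := by
    have hlen' : (L.take k).length = k := by simp; omega
    have hall : ∀ a ∈ L.take k, decide (kthLargest u k ≤ a) = true := by
      intro a ha
      rw [List.mem_take_iff_getElem] at ha
      obtain ⟨j, hj, rfl⟩ := ha
      simp only [decide_eq_true_eq, hv]
      have hjlen : j < L.length := lt_of_lt_of_le hj (by simp)
      have : (⟨j, hjlen⟩ : Fin L.length) ≤ ⟨k - 1, hklen⟩ := by
        simp only [Fin.mk_le_mk]; omega
      simpa using hsort.rel_get_of_le this
    rw [List.countP_eq_length.mpr hall]; exact hlen'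
  have htot : L.countP (fun x => decide (kthLargest u k ≤ x)) =
      (L.take k).countP (fun x => decide (kthLargest u k ≤ x)) +
      (L.drop k).countP (fun x => decide (kthLargest u k ≤ x)) := by
    conv_lhs => rw [hsplit]
    rw [List.countP_append]
  omega

lemma kth_countP_le (hk1 : 1 ≤ k) (hkn : k ≤ n) :
    n - k + 1 ≤ (List.ofFn u).countP (fun x => decide (x ≤ kthLargest u k)) := by
  set L := (List.ofFn u).insertionSort (fun a b => b ≤ a) with hL
  have hlen : L.length = n := by simp [hL]
  have hsort : List.Pairwise (fun a b : ℝ => b ≤ a) L := List.pairwise_insertionSort _ _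
  have hklen : k - 1 < L.length := by omega
  have hv : kthLargest u k = L.get ⟨k - 1, hklen⟩ := by
    simp [kthLargest, ← hL, List.getD_eq_getElem, hklen]
  have hperm : (List.ofFn u).countP (fun x => decide (x ≤ kthLargest u k)) =
      L.countP (fun x => decide (x ≤ kthLargest u k)) :=
    (List.perm_insertionSort _ _).countP_eq _ |>.symm
  rw [hperm]
  have hsplit : L = L.take (k-1) ++ L.drop (k-1) := (List.take_append_drop _ L).symm
  have hdrop : (L.drop (k-1)).countP (fun x => decide (x ≤ kthLargest u k)) = n - k + 1 := by
    have hlen' : (L.drop (k-1)).length = n - k + 1 := by simp [hlen]; omega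
    have hall : ∀ a ∈ L.drop (k-1), decide (a ≤ kthLargest u k) = true := by
      intro a ha
      rw [List.mem_drop_iff_getElem] at ha
      obtain ⟨j, hj, rfl⟩ := ha
      simp only [decide_eq_true_eq, hv]
      have : (⟨k - 1, hklen⟩ : Fin L.length) ≤ ⟨k - 1 + j, by omega⟩ := by
        simp only [Fin.mk_le_mk]; omega
      simpa using hsort.rel_get_of_le this
    rw [List.countP_eq_length.mpr hall]; exact hlen'
  have htot : L.countP (fun x => decide (x ≤ kthLargest u k)) =
      (L.take (k-1)).countP (fun x => decide (x ≤ kthLargest u k)) +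
      (L.drop (k-1)).countP (fun x => decide (x ≤ kthLargest u k)) := by
    conv_lhs => rw [hsplit]
    rw [List.countP_append]
  omega

lemma kth_ge_of_countP (c : ℝ) (hk1 : 1 ≤ k) (hkn : k ≤ n)
    (h : k ≤ (List.ofFn u).countP (fun x => decide (c ≤ x))) :
    c ≤ kthLargest u k := by
  by_contra hlt
  push_neg at hlt
  set L := (List.ofFn u).insertionSort (fun a b => b ≤ a) with hL
  have hlen : L.length = n := by simp [hL]
  have hsort : List.Pairwise (fun a b : ℝ => b ≤ a) L := List.pairwise_insertionSort _ _
  have hklen : k - 1 < L.length := by omega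
  have hv : kthLargest u k = L.get ⟨k - 1, hklen⟩ := by
    simp [kthLargest, ← hL, List.getD_eq_getElem, hklen]
  have hperm : (List.ofFn u).countP (fun x => decide (c ≤ x)) =
      L.countP (fun x => decide (c ≤ x)) :=
    (List.perm_insertionSort _ _).countP_eq _ |>.symm
  rw [hperm] at h
  have hsplit : L = L.take (k-1) ++ L.drop (k-1) := (List.take_append_drop _ L).symm
  have hdrop : (L.drop (k-1)).countP (fun x => decide (c ≤ x)) = 0 := by
    rw [List.countP_eq_zero]
    intro a ha
    rw [List.mem_drop_iff_getElem] at ha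
    obtain ⟨j, hj, rfl⟩ := ha
    simp only [decide_eq_true_eq, not_le]
    have hle : (⟨k - 1, hklen⟩ : Fin L.length) ≤ ⟨k - 1 + j, by omega⟩ := by
      simp only [Fin.mk_le_mk]; omega
    have := hsort.rel_get_of_le hle
    simp only [List.get_eq_getElem] at this hv
    calc L[k-1+j] ≤ L[k-1] := this
      _ < c := by rw [← hv]; exact hlt
  have htake : (L.take (k-1)).countP (fun x => decide (c ≤ x)) ≤ k - 1 := by
    calc _ ≤ (L.take (k-1)).length := List.countP_le_length
      _ ≤ k - 1 := by simp
  have : L.countP (fun x => decide (c ≤ x)) ≤ k - 1 := by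
    conv_lhs => rw [hsplit]
    rw [List.countP_append]; omega
  omega

lemma kth_le_of_countP (c : ℝ) (hk1 : 1 ≤ k) (hkn : k ≤ n)
    (h : n - k + 1 ≤ (List.ofFn u).countP (fun x => decide (x ≤ c))) :
    kthLargest u k ≤ c := by
  by_contra hlt
  push_neg at hlt
  set L := (List.ofFn u).insertionSort (fun a b => b ≤ a) with hL
  have hlen : L.length = n := by simp [hL]
  have hsort : List.Pairwise (fun a b : ℝ => b ≤ a) L := List.pairwise_insertionSort _ _
  have hklen : k - 1 < L.length := by omega
  have hv : kthLargest u k = L.get ⟨k - 1, hklen⟩ := by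
    simp [kthLargest, ← hL, List.getD_eq_getElem, hklen]
  have hperm : (List.ofFn u).countP (fun x => decide (x ≤ c)) =
      L.countP (fun x => decide (x ≤ c)) :=
    (List.perm_insertionSort _ _).countP_eq _ |>.symm
  rw [hperm] at h
  have hsplit : L = L.take k ++ L.drop k := (List.take_append_drop _ L).symm
  have htake : (L.take k).countP (fun x => decide (x ≤ c)) = 0 := by
    rw [List.countP_eq_zero]
    intro a ha
    rw [List.mem_take_iff_getElem] at ha
    obtain ⟨j, hj, rfl⟩ := ha
    simp only [decide_eq_true_eq, not_le]
    have hjlen : j < L.length := lt_of_lt_of_le hj (by simp)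
    have hle : (⟨j, hjlen⟩ : Fin L.length) ≤ ⟨k - 1, hklen⟩ := by
      simp only [Fin.mk_le_mk]; omega
    have := hsort.rel_get_of_le hle
    simp only [List.get_eq_getElem] at this hv
    calc c < L[k-1] := by rw [← hv]; exact hlt
      _ ≤ L[j] := this
  have hdrop : (L.drop k).countP (fun x => decide (x ≤ c)) ≤ n - k := by
    calc _ ≤ (L.drop k).length := List.countP_le_length
      _ ≤ n - k := by simp [hlen]
  have : L.countP (fun x => decide (x ≤ c)) ≤ n - k := by
    conv_lhs => rw [hsplit]
    rw [List.countP_append]; omega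
  omega
end

/-- Self-defeating winner swap. If under sincere voting
`φ_σ(u(W₀)) > φ_σ(u(W̃)) > 0`, and a unilateral misreport by member `i` strictly
decreases `φ_σ(u(W₀))` and strictly increases `φ_σ(u(W̃))`, then member `i` sincerely
strictly prefers `W₀` to `W̃`. -/
theorem self_defeating_winner_swap
    {X : Type*} [MetricSpace X] {n : ℕ}
    (s : X) (vstar : Fin n → X)
    (σ : ℝ) (hσ : 1/2 ≤ σ ∧ σ < 1) (k : ℕ) (hk : k = ⌈σ * n⌉₊)
    (i : Fin n) (r : Fin n → X)
    (hr : ∀ j : Fin n, j ≠ i → r j = vstar j)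
    (W₀ Wt : X)
    (hgt : kthLargest (fun j => dist (vstar j) s - dist (vstar j) Wt) k <
            kthLargest (fun j => dist (vstar j) s - dist (vstar j) W₀) k)
    (hpos : 0 < kthLargest (fun j => dist (vstar j) s - dist (vstar j) Wt) k)
    (hdec : kthLargest (fun j => dist (r j) s - dist (r j) W₀) k <
            kthLargest (fun j => dist (vstar j) s - dist (vstar j) W₀) k)
    (hinc : kthLargest (fun j => dist (vstar j) s - dist (vstar j) Wt) k <
            kthLargest (fun j => dist (r j) s - dist (r j) Wt) k) :
    dist (vstar i) s - dist (vstar i) Wt < dist (vstar i) s - dist (vstar i) W₀ := by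
  have hn : 0 < n := i.pos
  have hnR : (0:ℝ) < n := by exact_mod_cast hn
  have hk1 : 1 ≤ k := by
    rw [hk]
    have : (0:ℝ) < σ * n := by nlinarith [hσ.1]
    exact Nat.ceil_pos.mpr this
  have hkn : k ≤ n := by
    rw [hk]
    exact Nat.ceil_le.mpr (by nlinarith [hσ.2])
  set u₀ : Fin n → ℝ := fun j => dist (vstar j) s - dist (vstar j) W₀ with hu₀
  set u₀' : Fin n → ℝ := fun j => dist (r j) s - dist (r j) W₀ with hu₀'
  set ut : Fin n → ℝ := fun j => dist (vstar j) s - dist (vstar j) Wt with hut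
  set ut' : Fin n → ℝ := fun j => dist (r j) s - dist (r j) Wt with hut'
  have claim1 : kthLargest u₀ k ≤ u₀ i := by
    by_contra h
    push_neg at h
    have h1 := kth_countP_ge u₀ k hk1 hkn
    have h2 : (List.ofFn u₀).countP (fun x => decide (kthLargest u₀ k ≤ x)) ≤
        (List.ofFn u₀').countP (fun x => decide (kthLargest u₀ k ≤ x)) := by
      rw [List.ofFn_eq_map, List.ofFn_eq_map, List.countP_map, List.countP_map]
      apply List.countP_mono_left
      intro j _ hj
      simp only [Function.comp, decide_eq_true_eq] at hj ⊢
      by_cases hji : j = i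
      · exact absurd (hji ▸ hj) (not_le.mpr h)
      · simp only [hu₀', hr j hji]; exact hj
    have := kth_ge_of_countP u₀' k (kthLargest u₀ k) hk1 hkn (le_trans h1 h2)
    linarith
  have claim2 : ut i ≤ kthLargest ut k := by
    by_contra h
    push_neg at h
    have h1 := kth_countP_le ut k hk1 hkn
    have h2 : (List.ofFn ut).countP (fun x => decide (x ≤ kthLargest ut k)) ≤
        (List.ofFn ut').countP (fun x => decide (x ≤ kthLargest ut k)) := by
      rw [List.ofFn_eq_map, List.ofFn_eq_map, List.countP_map, List.countP_map]
      apply List.countP_mono_left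
      intro j _ hj
      simp only [Function.comp, decide_eq_true_eq] at hj ⊢
      by_cases hji : j = i
      · exact absurd (hji ▸ hj) (not_le.mpr h)
      · simp only [hut', hr j hji]; exact hj
    have := kth_le_of_countP ut' k (kthLargest ut k) hk1 hkn (le_trans h1 h2)
    linarith
  have : ut i < u₀ i := by linarith
  simpa [hu₀, hut] using this
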